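/- Let v, w : D → ℝ be measurable with ‖v‖_{L^{2n²}} < ∞ and ‖w‖_{L^{2n²}} < ∞. Then ‖F̂(v) − F̂(w)‖_{L²}² ≤ max{1, λ_D(D)} · ( (n(n+1)/2) · max_{j∈{1,2,…,n}} |a_j| )² · ‖v−w‖_{L^{2n²}}² · ( 1 + ‖v‖_{L^{2n²}}^{max{1, 2(n−1)}} + ‖w‖_{L^{2n²}}^{max{1, 2(n−1)}} ). (Lemma 6.8 of the paper: local Lipschitz estimate for the polynomial nonlinearity from L^{2n²}(λ_D;ℝ) to L²(λ_D;ℝ).) -/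

import Mathlib

open MeasureTheory ENNReal

/-- The open box `D = (b1, b2)^d ⊆ ℝ^d`. -/
def box (d : ℕ) (b1 b2 : ℝ) : Set (Fin d → ℝ) :=
  Set.univ.pi fun _ => Set.Ioo b1 b2

/-- The `L^r(λ_D; ℝ)`-norm (as a real number, `∞` being sent to `0` by `toReal`;
all norms appearing below are finite under the stated hypotheses). -/
noncomputable def lpN (d : ℕ) (b1 b2 : ℝ) (r : ℝ) (u : (Fin d → ℝ) → ℝ) : ℝ :=
  (eLpNorm u (ENNReal.ofReal r) (volume.restrict (box d b1 b2))).toReal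

/-- The polynomial Nemytskii operation `F̂(u) = Σ_{k=0}^n a_k u^k` (pointwise). -/
noncomputable def Fpoly (d n : ℕ) (a : ℕ → ℝ) (u : (Fin d → ℝ) → ℝ) :
    (Fin d → ℝ) → ℝ :=
  fun x => ∑ k ∈ Finset.range (n + 1), a k * u x ^ k

/-- Pointwise bound on a single mixed monomial. -/
lemma aux_ptwise (c e : ℝ) (i j s : ℕ) (h : i + j ≤ s) :
    |c| ^ i * |e| ^ j ≤ Real.sqrt (1 + |c| ^ (2 * s) + |e| ^ (2 * s)) := by
  have hc : (0:ℝ) ≤ |c| := abs_nonneg _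
  have he : (0:ℝ) ≤ |e| := abs_nonneg _
  set t : ℝ := max |c| |e| with ht
  have htn : (0:ℝ) ≤ t := le_trans hc (le_max_left _ _)
  have hG0 : (0:ℝ) ≤ 1 + |c| ^ (2 * s) + |e| ^ (2 * s) := by positivity
  have h1 : |c| ^ i * |e| ^ j ≤ t ^ (i + j) := by
    rw [pow_add]
    exact mul_le_mul (pow_le_pow_left₀ hc (le_max_left _ _) i)
      (pow_le_pow_left₀ he (le_max_right _ _) j) (pow_nonneg he j) (pow_nonneg htn _)
  have h2 : (t ^ (i + j)) ^ 2 ≤ 1 + |c| ^ (2 * s) + |e| ^ (2 * s) := by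
    have hsq : (t ^ (i + j)) ^ 2 = t ^ (2 * (i + j)) := by
      rw [← pow_mul]; ring_nf
    rw [hsq]
    rcases le_total t 1 with hle | hge
    · have h3 : t ^ (2 * (i + j)) ≤ 1 := pow_le_one₀ htn hle
      nlinarith [pow_nonneg hc (2 * s), pow_nonneg he (2 * s)]
    · have h3 : t ^ (2 * (i + j)) ≤ t ^ (2 * s) :=
        pow_le_pow_right₀ hge (by omega)
      have h4 : t ^ (2 * s) ≤ |c| ^ (2 * s) + |e| ^ (2 * s) := by
        rcases max_cases |c| |e| with ⟨hm, _⟩ | ⟨hm, _⟩ <;> rw [← ht] at * <;>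
          rw [hm] <;> nlinarith [pow_nonneg hc (2 * s), pow_nonneg he (2 * s)]
      linarith
  calc |c| ^ i * |e| ^ j ≤ t ^ (i + j) := h1
    _ ≤ Real.sqrt (1 + |c| ^ (2 * s) + |e| ^ (2 * s)) := by
        have := Real.sqrt_le_sqrt h2
        rwa [Real.sqrt_sq (pow_nonneg htn _)] at this

/-- `x^c ≤ max 1 x` for exponents in `[0,1]`. -/
lemma aux_rpow_le_max (X : ℝ≥0∞) {c : ℝ} (h0 : 0 ≤ c) (h1 : c ≤ 1) :
    X ^ c ≤ max 1 X := by
  rcases le_total X 1 with hle | hge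
  · refine le_trans ?_ (le_max_left _ _)
    calc X ^ c ≤ 1 ^ c := ENNReal.rpow_le_rpow hle h0
      _ = 1 := ENNReal.one_rpow c
  · refine le_trans ?_ (le_max_right _ _)
    calc X ^ c ≤ X ^ (1:ℝ) := ENNReal.rpow_le_rpow_of_exponent_le hge h1
      _ = X := ENNReal.rpow_one X

set_option maxHeartbeats 2000000 in
theorem stmt12
    (T : ℝ) (hT : 0 < T) (d : ℕ) (hd : 0 < d) (n : ℕ) (hn : Odd n)
    (a : ℕ → ℝ) (han : a n < 0) (b1 b2 : ℝ) (hb : b1 < b2)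
    (v w : (Fin d → ℝ) → ℝ) (hvm : Measurable v) (hwm : Measurable w)
    (hv : eLpNorm v (ENNReal.ofReal (2 * (n : ℝ) ^ 2)) (volume.restrict (box d b1 b2)) < ⊤)
    (hw : eLpNorm w (ENNReal.ofReal (2 * (n : ℝ) ^ 2)) (volume.restrict (box d b1 b2)) < ⊤) :
    lpN d b1 b2 2 (fun x => Fpoly d n a v x - Fpoly d n a w x) ^ 2 ≤
      max 1 (volume (box d b1 b2)).toReal *
        ((n : ℝ) * ((n : ℝ) + 1) / 2 *
            (Finset.Icc 1 n).sup' (Finset.nonempty_Icc.mpr hn.pos) (fun j => |a j|)) ^ 2 *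
        lpN d b1 b2 (2 * (n : ℝ) ^ 2) (fun x => v x - w x) ^ 2 *
        (1 + lpN d b1 b2 (2 * (n : ℝ) ^ 2) v ^ max 1 (2 * (n - 1)) +
          lpN d b1 b2 (2 * (n : ℝ) ^ 2) w ^ max 1 (2 * (n - 1))) := by
  classical
  set μ : Measure (Fin d → ℝ) := volume.restrict (box d b1 b2) with hμdef
  set M : ℝ := (Finset.Icc 1 n).sup' (Finset.nonempty_Icc.mpr hn.pos) (fun j => |a j|) with hMdef
  have hVol_eq : μ Set.univ = volume (box d b1 b2) := Measure.restrict_apply_univ _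
  have hVol_val : volume (box d b1 b2) = ENNReal.ofReal (b2 - b1) ^ d := by
    rw [box, volume_pi_pi]; simp [Real.volume_Ioo]
  have hVol_ne : volume (box d b1 b2) ≠ ⊤ := by
    rw [hVol_val]; exact ENNReal.pow_ne_top ENNReal.ofReal_ne_top
  have hVol_pos : volume (box d b1 b2) ≠ 0 := by
    rw [hVol_val]
    exact (ENNReal.pow_ne_zero (ENNReal.ofReal_pos.mpr (by linarith : (0:ℝ) < b2 - b1)).ne' d)
  have hμne : μ ≠ 0 := by
    apply Measure.measure_univ_ne_zero.mp
    rw [hVol_eq]; exact hVol_pos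
  have hMk : ∀ k, 1 ≤ k → k ≤ n → |a k| ≤ M := fun k h1 h2 =>
    Finset.le_sup' (fun j => |a j|) (Finset.mem_Icc.mpr ⟨h1, h2⟩)
  have hM0 : 0 ≤ M := le_trans (abs_nonneg _) (hMk n hn.pos le_rfl)
  rcases Nat.lt_or_ge n 2 with hn1 | hn2
  · -- n = 1
    obtain rfl : n = 1 := by have hpos := hn.pos; omega
    have hdiff : (fun x => Fpoly d 1 a v x - Fpoly d 1 a w x)
        = (a 1) • (fun x => v x - w x) := by
      funext x
      simp only [Fpoly, Finset.sum_range_succ, Finset.sum_range_zero, Pi.smul_apply,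
        smul_eq_mul, pow_zero, pow_one, zero_add]
      ring
    have hM1 : M = |a 1| := by
      rw [hMdef]; simp
    have h2e : ENNReal.ofReal (2:ℝ) = 2 := by
      rw [ENNReal.ofReal_ofNat]
    have hr2 : (2 : ℝ) * ((1:ℕ):ℝ) ^ 2 = 2 := by norm_num
    have hL : lpN d b1 b2 2 (fun x => Fpoly d 1 a v x - Fpoly d 1 a w x)
        = |a 1| * lpN d b1 b2 2 (fun x => v x - w x) := by
      rw [lpN, lpN, hdiff, eLpNorm_const_smul, ENNReal.toReal_mul]
      congr 1
    have hmax : max 1 (2 * (1 - 1)) = 1 := by norm_num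
    rw [hL, hmax, hr2]
    have hLvw : 0 ≤ lpN d b1 b2 2 (fun x => v x - w x) := ENNReal.toReal_nonneg
    have hlv : 0 ≤ lpN d b1 b2 2 v := ENNReal.toReal_nonneg
    have hlw : 0 ≤ lpN d b1 b2 2 w := ENNReal.toReal_nonneg
    have hmaxV : (1:ℝ) ≤ max 1 (volume (box d b1 b2)).toReal := le_max_left _ _
    have hconst : ((1:ℕ):ℝ) * (((1:ℕ):ℝ) + 1) / 2 * M = |a 1| := by
      rw [hM1]; norm_num
    calc (|a 1| * lpN d b1 b2 2 fun x => v x - w x) ^ 2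
        = 1 * (|a 1|) ^ 2 * (lpN d b1 b2 2 fun x => v x - w x) ^ 2 * 1 := by ring
      _ ≤ max 1 (volume (box d b1 b2)).toReal * (((1:ℕ):ℝ) * (((1:ℕ):ℝ) + 1) / 2 * M) ^ 2 *
            (lpN d b1 b2 2 fun x => v x - w x) ^ 2 *
            (1 + lpN d b1 b2 2 v ^ 1 + lpN d b1 b2 2 w ^ 1) := by
          rw [hconst]
          gcongr <;> first
            | exact hmaxV
            | linarith [hlv, hlw]
            | positivity
      _ = _ := by norm_num
  · -- 2 ≤ n
    have hn1' : (1:ℕ) ≤ n := hn.pos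
    set nR : ℝ := (n : ℝ) with hnR
    have hnR2 : (2:ℝ) ≤ nR := by rw [hnR]; exact_mod_cast hn2
    set P : ℝ≥0∞ := ENNReal.ofReal (2 * nR ^ 2) with hP
    have hP_one : (1:ℝ≥0∞) ≤ P := ENNReal.one_le_ofReal.mpr (by nlinarith)
    set q2 : ℝ := nR ^ 2 / (nR ^ 2 - 1) with hq2
    have hden : (0:ℝ) < nR ^ 2 - 1 := by nlinarith
    have hq2_pos : 0 < q2 := by positivity
    have hq2_one : 1 ≤ q2 := by rw [hq2, le_div_iff₀ hden]; nlinarith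
    set Q2 : ℝ≥0∞ := ENNReal.ofReal q2 with hQ2
    set Q : ℝ≥0∞ := ENNReal.ofReal (2 * q2) with hQ
    set e : ℕ := 2 * (n - 1) with he
    have he2 : 2 ≤ e := by omega
    have he_cast : ((e:ℕ):ℝ) = 2 * (nR - 1) := by
      rw [he, hnR]; push_cast [Nat.cast_sub hn1']; ring
    have he_posR : (0:ℝ) < (e:ℝ) := by positivity
    set G : (Fin d → ℝ) → ℝ := fun x => 1 + |v x| ^ e + |w x| ^ e with hG
    set B : ℝ≥0∞ := eLpNorm G Q2 μ with hB
    set E : ℝ≥0∞ := eLpNorm (fun x => v x - w x) P μ with hE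
    have hvae : AEStronglyMeasurable v μ := hvm.aestronglyMeasurable
    have hwae : AEStronglyMeasurable w μ := hwm.aestronglyMeasurable
    have hsub : AEStronglyMeasurable (fun x => v x - w x) μ := (hvm.sub hwm).aestronglyMeasurable
    -- Hölder exponents
    have hpqr : (1:ℝ≥0∞) / 2 = 1 / Q + 1 / P := by
      rw [hQ, hP, one_div, one_div, one_div, ← ENNReal.ofReal_inv_of_pos (by positivity),
        ← ENNReal.ofReal_inv_of_pos (by positivity),
        ← ENNReal.ofReal_add (by positivity) (by positivity),
        show ((2:ℝ≥0∞))⁻¹ = ENNReal.ofReal 2⁻¹ by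
          rw [ENNReal.ofReal_inv_of_pos (by norm_num)]; norm_num]
      congr 1
      rw [hq2]
      field_simp
      ring
    -- per-pair Hölder bound
    have hBE : ∀ k, k ≤ n → ∀ i, i < k →
        eLpNorm (fun x => v x ^ i * w x ^ (k - 1 - i) * (v x - w x)) 2 μ
          ≤ B ^ (1/2:ℝ) * E := by
      intro k hk i hik
      set φ : (Fin d → ℝ) → ℝ := fun x => v x ^ i * w x ^ (k - 1 - i) with hφ
      have hφae : AEStronglyMeasurable φ μ :=
        ((hvm.pow_const i).mul (hwm.pow_const _)).aestronglyMeasurable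
      have h1 : eLpNorm (fun x => v x ^ i * w x ^ (k - 1 - i) * (v x - w x)) 2 μ
          ≤ eLpNorm φ Q μ * E := by
        haveI : ENNReal.HolderTriple Q P 2 := ⟨by simpa [one_div] using hpqr.symm⟩
        have h := eLpNorm_smul_le_mul_eLpNorm (p := Q) (q := P) (r := 2) hsub hφae
        have hfe : φ • (fun x => v x - w x) = fun x => v x ^ i * w x ^ (k - 1 - i) * (v x - w x) := rfl
        rwa [hfe] at h
      have h2 : eLpNorm φ Q μ ≤ B ^ (1/2:ℝ) := by
        have hmono : eLpNorm φ Q μ ≤ eLpNorm (fun x => ‖G x‖ ^ (1/2:ℝ)) Q μ := by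
          apply eLpNorm_mono
          intro x
          have hGx : 0 ≤ G x := by
            rw [hG]; positivity
          have hrhs : ‖‖G x‖ ^ (1/2:ℝ)‖ = Real.sqrt (G x) := by
            rw [Real.norm_eq_abs, Real.norm_eq_abs, abs_of_nonneg hGx,
              abs_of_nonneg (Real.rpow_nonneg hGx _), Real.sqrt_eq_rpow]
          rw [hrhs, hφ, Real.norm_eq_abs, abs_mul, abs_pow, abs_pow]
          have := aux_ptwise (v x) (w x) i (k - 1 - i) (n - 1) (by omega)
          rw [hG]
          simpa [he] using this
        have heq : eLpNorm (fun x => ‖G x‖ ^ (1/2:ℝ)) Q μ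
            = (eLpNorm G (Q * ENNReal.ofReal (1/2)) μ) ^ (1/2:ℝ) :=
          eLpNorm_norm_rpow G (by norm_num)
        have hQhalf : Q * ENNReal.ofReal (1/2) = Q2 := by
          rw [hQ, hQ2, ← ENNReal.ofReal_mul (by positivity)]
          congr 1; ring
        calc eLpNorm φ Q μ ≤ eLpNorm (fun x => ‖G x‖ ^ (1/2:ℝ)) Q μ := hmono
          _ = B ^ (1/2:ℝ) := by rw [heq, hQhalf, hB]
      exact le_trans h1 (mul_le_mul' h2 le_rfl)
    -- bound on B
    have hQ2_one : (1:ℝ≥0∞) ≤ Q2 := ENNReal.one_le_ofReal.mpr hq2_one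
    have hQ2_toReal : Q2.toReal = q2 := ENNReal.toReal_ofReal hq2_pos.le
    set M1 : ℝ≥0∞ := max 1 (μ Set.univ) with hM1
    have hM1_ne : M1 ≠ ⊤ := by
      rw [hM1, hVol_eq]
      exact (max_lt (by norm_num) hVol_ne.lt_top).ne
    have hconst1 : eLpNorm (fun _ : Fin d → ℝ => (1:ℝ)) Q2 μ ≤ M1 := by
      rw [eLpNorm_const (1:ℝ) ((ENNReal.ofReal_pos.mpr hq2_pos).ne') hμne]
      rw [hQ2_toReal]
      simp only [enorm_one, one_mul]
      exact aux_rpow_le_max _ (by positivity) ((div_le_one hq2_pos).mpr hq2_one)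
    set Av : ℝ≥0∞ := (eLpNorm v P μ) ^ ((e:ℕ):ℝ) with hAv
    set Aw : ℝ≥0∞ := (eLpNorm w P μ) ^ ((e:ℕ):ℝ) with hAw
    have hpow : ∀ u : (Fin d → ℝ) → ℝ, Measurable u →
        eLpNorm (fun x => |u x| ^ e) Q2 μ ≤ M1 * (eLpNorm u P μ) ^ ((e:ℕ):ℝ) := by
      intro u hum
      have heq1 : (fun x => |u x| ^ e) = fun x => ‖u x‖ ^ ((e:ℕ):ℝ) := by
        funext x; rw [Real.norm_eq_abs, Real.rpow_natCast]
      rw [heq1, eLpNorm_norm_rpow u he_posR]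
      set r : ℝ≥0∞ := Q2 * ENNReal.ofReal ((e:ℕ):ℝ) with hr
      have hr_eq : r = ENNReal.ofReal (q2 * (e:ℝ)) := by
        rw [hr, hQ2, ← ENNReal.ofReal_mul hq2_pos.le]
      have hq2e_pos : (0:ℝ) < q2 * (e:ℝ) := by positivity
      have hq2eP : q2 * (e:ℝ) ≤ 2 * nR ^ 2 := by
        rw [he_cast, hq2, div_mul_eq_mul_div, div_le_iff₀ hden]
        nlinarith [mul_nonneg (mul_nonneg (mul_nonneg (by linarith : (0:ℝ) ≤ nR) (by linarith : (0:ℝ) ≤ nR)) (by linarith : (0:ℝ) ≤ nR)) (by linarith : (0:ℝ) ≤ nR - 1)]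
      have hrP : r ≤ P := by
        rw [hr_eq, hP]; exact ENNReal.ofReal_le_ofReal hq2eP
      have hemb := eLpNorm_le_eLpNorm_mul_rpow_measure_univ (μ := μ) hrP hum.aestronglyMeasurable
      set δ : ℝ := 1 / r.toReal - 1 / P.toReal with hδ
      have hr_toReal : r.toReal = q2 * (e:ℝ) := by
        rw [hr_eq]; exact ENNReal.toReal_ofReal hq2e_pos.le
      have hP_toReal : P.toReal = 2 * nR ^ 2 := by
        rw [hP]; exact ENNReal.toReal_ofReal (by nlinarith)
      have hδ0 : 0 ≤ δ := by
        rw [hδ, hr_toReal, hP_toReal, sub_nonneg]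
        exact one_div_le_one_div_of_le hq2e_pos hq2eP
      have hδe1 : δ * (e:ℝ) ≤ 1 := by
        rw [hδ, hr_toReal, hP_toReal]
        have hexpand : (1 / (q2 * (e:ℝ)) - 1 / (2 * nR ^ 2)) * (e:ℝ)
            = 1 / q2 - (e:ℝ) / (2 * nR ^ 2) := by
          field_simp
        rw [hexpand]
        have h1 : 1 / q2 ≤ 1 := (div_le_one hq2_pos).mpr hq2_one
        have h2 : 0 ≤ (e:ℝ) / (2 * nR ^ 2) := by positivity
        linarith
      calc eLpNorm u r μ ^ ((e:ℕ):ℝ)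
          ≤ (eLpNorm u P μ * μ Set.univ ^ δ) ^ ((e:ℕ):ℝ) :=
            ENNReal.rpow_le_rpow hemb (by positivity)
        _ = (eLpNorm u P μ) ^ ((e:ℕ):ℝ) * (μ Set.univ) ^ (δ * (e:ℝ)) := by
            rw [ENNReal.mul_rpow_of_nonneg _ _ (by positivity), ← ENNReal.rpow_mul]
        _ ≤ (eLpNorm u P μ) ^ ((e:ℕ):ℝ) * M1 := by
            apply mul_le_mul' le_rfl
            exact le_trans (aux_rpow_le_max _ (mul_nonneg hδ0 (Nat.cast_nonneg e)) hδe1)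
              (le_of_eq hM1.symm)
        _ = M1 * (eLpNorm u P μ) ^ ((e:ℕ):ℝ) := mul_comm _ _
    have hGsplit : G = (fun _ : Fin d → ℝ => (1:ℝ))
        + ((fun x => |v x| ^ e) + fun x => |w x| ^ e) := by
      funext x
      simp only [hG, Pi.add_apply]
      ring
    have hmv : AEStronglyMeasurable (fun x => |v x| ^ e) μ :=
      (hvm.abs.pow_const e).aestronglyMeasurable
    have hmw : AEStronglyMeasurable (fun x => |w x| ^ e) μ :=
      (hwm.abs.pow_const e).aestronglyMeasurable
    have hBle : B ≤ M1 * (1 + Av + Aw) := by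
      calc B = eLpNorm ((fun _ : Fin d → ℝ => (1:ℝ))
            + ((fun x => |v x| ^ e) + fun x => |w x| ^ e)) Q2 μ := by rw [hB, ← hGsplit]
        _ ≤ eLpNorm (fun _ : Fin d → ℝ => (1:ℝ)) Q2 μ
            + eLpNorm ((fun x => |v x| ^ e) + fun x => |w x| ^ e) Q2 μ :=
            eLpNorm_add_le aestronglyMeasurable_const (hmv.add hmw) hQ2_one
        _ ≤ eLpNorm (fun _ : Fin d → ℝ => (1:ℝ)) Q2 μ
            + (eLpNorm (fun x => |v x| ^ e) Q2 μ + eLpNorm (fun x => |w x| ^ e) Q2 μ) :=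
            add_le_add le_rfl (eLpNorm_add_le hmv hmw hQ2_one)
        _ ≤ M1 + (M1 * Av + M1 * Aw) :=
            add_le_add hconst1 (add_le_add (hpow v hvm) (hpow w hwm))
        _ = M1 * (1 + Av + Aw) := by ring
    -- main assembly
    set C : ℝ≥0∞ := ENNReal.ofReal M * ENNReal.ofReal (nR * (nR + 1) / 2) with hC
    have hmain : eLpNorm (fun x => Fpoly d n a v x - Fpoly d n a w x) 2 μ
        ≤ C * (B ^ (1/2:ℝ) * E) := by
      have hexp : (fun x => Fpoly d n a v x - Fpoly d n a w x)
          = ∑ k ∈ Finset.range (n+1), fun x => a k * (v x ^ k - w x ^ k) := by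
        funext x
        rw [Finset.sum_apply]
        simp only [Fpoly]
        rw [← Finset.sum_sub_distrib]
        exact Finset.sum_congr rfl fun k _ => (mul_sub _ _ _).symm
      have hterm_ae : ∀ k, AEStronglyMeasurable (fun x => a k * (v x ^ k - w x ^ k)) μ :=
        fun k => (measurable_const.mul ((hvm.pow_const k).sub (hwm.pow_const k))).aestronglyMeasurable
      have hkey : ∀ k ∈ Finset.range (n+1),
          eLpNorm (fun x => a k * (v x ^ k - w x ^ k)) 2 μ
            ≤ ENNReal.ofReal M * ((k:ℝ≥0∞) * (B ^ (1/2:ℝ) * E)) := by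
        intro k hkmem
        have hk_le : k ≤ n := by
          have := Finset.mem_range.mp hkmem; omega
        have hsmul : (fun x => a k * (v x ^ k - w x ^ k))
            = (a k) • (fun x => v x ^ k - w x ^ k) := rfl
        rw [hsmul, eLpNorm_const_smul]
        rcases Nat.eq_zero_or_pos k with rfl | hkpos
        · simp
        · have hgeom : (fun x => v x ^ k - w x ^ k)
              = ∑ i ∈ Finset.range k, fun x => v x ^ i * w x ^ (k - 1 - i) * (v x - w x) := by
            funext x
            rw [Finset.sum_apply, ← geom_sum₂_mul (v x) (w x) k, Finset.sum_mul]
          have hae_i : ∀ i ∈ Finset.range k,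
              AEStronglyMeasurable (fun x => v x ^ i * w x ^ (k - 1 - i) * (v x - w x)) μ :=
            fun i _ => (((hvm.pow_const i).mul (hwm.pow_const _)).mul (hvm.sub hwm)).aestronglyMeasurable
          have h1 : eLpNorm (fun x => v x ^ k - w x ^ k) 2 μ ≤ (k:ℝ≥0∞) * (B ^ (1/2:ℝ) * E) := by
            rw [hgeom]
            calc eLpNorm (∑ i ∈ Finset.range k, fun x => v x ^ i * w x ^ (k - 1 - i) * (v x - w x)) 2 μ
                ≤ ∑ i ∈ Finset.range k,
                    eLpNorm (fun x => v x ^ i * w x ^ (k - 1 - i) * (v x - w x)) 2 μ :=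
                  eLpNorm_sum_le hae_i (by norm_num)
              _ ≤ ∑ _i ∈ Finset.range k, (B ^ (1/2:ℝ) * E) :=
                  Finset.sum_le_sum fun i hi => hBE k hk_le i (Finset.mem_range.mp hi)
              _ = (k:ℝ≥0∞) * (B ^ (1/2:ℝ) * E) := by
                  rw [Finset.sum_const, Finset.card_range, nsmul_eq_mul]
          have h2 : ((‖a k‖₊ : ℝ≥0∞)) ≤ ENNReal.ofReal M := by
            rw [show ((‖a k‖₊ : ℝ≥0∞)) = ENNReal.ofReal |a k| by
              rw [← Real.norm_eq_abs, ofReal_norm]; rfl]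
            exact ENNReal.ofReal_le_ofReal (hMk k hkpos hk_le)
          exact mul_le_mul' h2 h1
      have hNsum : (∑ k ∈ Finset.range (n+1), (k:ℝ≥0∞)) = ENNReal.ofReal (nR * (nR + 1) / 2) := by
        have h1 : (∑ k ∈ Finset.range (n+1), k) * 2 = (n+1) * n := Finset.sum_range_id_mul_two (n+1)
        have h2 : ((∑ k ∈ Finset.range (n+1), k : ℕ) : ℝ) = nR * (nR + 1) / 2 := by
          have := congrArg (Nat.cast : ℕ → ℝ) h1
          push_cast at this ⊢
          rw [hnR]; linarith
        rw [show (∑ k ∈ Finset.range (n+1), (k:ℝ≥0∞)) = ((∑ k ∈ Finset.range (n+1), k : ℕ) : ℝ≥0∞) by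
          push_cast; rfl]
        rw [← h2, ENNReal.ofReal_natCast]
      calc eLpNorm (fun x => Fpoly d n a v x - Fpoly d n a w x) 2 μ
          = eLpNorm (∑ k ∈ Finset.range (n+1), fun x => a k * (v x ^ k - w x ^ k)) 2 μ := by rw [hexp]
        _ ≤ ∑ k ∈ Finset.range (n+1), eLpNorm (fun x => a k * (v x ^ k - w x ^ k)) 2 μ :=
            eLpNorm_sum_le (fun k _ => hterm_ae k) (by norm_num)
        _ ≤ ∑ k ∈ Finset.range (n+1), ENNReal.ofReal M * ((k:ℝ≥0∞) * (B ^ (1/2:ℝ) * E)) :=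
            Finset.sum_le_sum hkey
        _ = C * (B ^ (1/2:ℝ) * E) := by
            rw [← Finset.mul_sum, ← Finset.sum_mul, hNsum, hC]
            ring
    -- finiteness
    have hE_ne : E ≠ ⊤ := by
      have h := eLpNorm_sub_le hvae hwae hP_one (μ := μ)
      have : E ≤ eLpNorm v P μ + eLpNorm w P μ := by
        rw [hE]; exact h
      exact (lt_of_le_of_lt this (ENNReal.add_lt_top.mpr ⟨hv, hw⟩)).ne
    have hAv_ne : Av ≠ ⊤ := ENNReal.rpow_ne_top_of_nonneg (by positivity) hv.ne
    have hAw_ne : Aw ≠ ⊤ := ENNReal.rpow_ne_top_of_nonneg (by positivity) hw.ne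
    have hS_ne : (1 + Av + Aw) ≠ ⊤ := by
      simp [ENNReal.add_eq_top, hAv_ne, hAw_ne]
    have hB_ne : B ≠ ⊤ :=
      (lt_of_le_of_lt hBle (ENNReal.mul_lt_top hM1_ne.lt_top hS_ne.lt_top)).ne
    have hBhalf_ne : B ^ (1/2:ℝ) ≠ ⊤ := ENNReal.rpow_ne_top_of_nonneg (by norm_num) hB_ne
    have hRHS_ne : C * (B ^ (1/2:ℝ) * E) ≠ ⊤ := by
      apply ENNReal.mul_ne_top
      · exact ENNReal.mul_ne_top ENNReal.ofReal_ne_top ENNReal.ofReal_ne_top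
      · exact ENNReal.mul_ne_top hBhalf_ne hE_ne
    -- pass to real numbers
    have h2e : ENNReal.ofReal (2:ℝ) = 2 := by rw [ENNReal.ofReal_ofNat]
    have hcnn : 0 ≤ nR * (nR + 1) / 2 := by positivity
    have hmainR : lpN d b1 b2 2 (fun x => Fpoly d n a v x - Fpoly d n a w x)
        ≤ M * (nR * (nR + 1) / 2) * ((B ^ (1/2:ℝ)).toReal * E.toReal) := by
      have h := ENNReal.toReal_mono hRHS_ne hmain
      rw [lpN, h2e, ← hμdef]
      rw [ENNReal.toReal_mul, ENNReal.toReal_mul, ENNReal.toReal_mul,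
        ENNReal.toReal_ofReal hM0, ENNReal.toReal_ofReal hcnn] at h
      exact h
    have hBhalf_sq : ((B ^ (1/2:ℝ)).toReal) ^ 2 = B.toReal := by
      rw [← ENNReal.toReal_rpow, ← Real.sqrt_eq_rpow]
      exact Real.sq_sqrt ENNReal.toReal_nonneg
    have hBR : B.toReal ≤ max 1 (volume (box d b1 b2)).toReal
        * (1 + Av.toReal + Aw.toReal) := by
      have h := ENNReal.toReal_mono (ENNReal.mul_ne_top hM1_ne hS_ne) hBle
      rw [ENNReal.toReal_mul] at h
      have hM1t : M1.toReal = max 1 (volume (box d b1 b2)).toReal := by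
        rw [hM1, hVol_eq, ENNReal.toReal_max ENNReal.one_ne_top hVol_ne, ENNReal.toReal_one]
      have hSt : (1 + Av + Aw).toReal = 1 + Av.toReal + Aw.toReal := by
        rw [ENNReal.toReal_add (by simp [ENNReal.add_eq_top, hAv_ne]) hAw_ne,
          ENNReal.toReal_add ENNReal.one_ne_top hAv_ne, ENNReal.toReal_one]
      rwa [hM1t, hSt] at h
    have hAvt : Av.toReal = (eLpNorm v P μ).toReal ^ e := by
      rw [hAv, ← ENNReal.toReal_rpow, Real.rpow_natCast]
    have hAwt : Aw.toReal = (eLpNorm w P μ).toReal ^ e := by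
      rw [hAw, ← ENNReal.toReal_rpow, Real.rpow_natCast]
    have hmaxe : max 1 (2 * (n - 1)) = e := by rw [he]; omega
    -- final computation
    have hgoal_lpN : lpN d b1 b2 (2 * nR ^ 2) (fun x => v x - w x) = E.toReal := by
      rw [lpN, ← hP, ← hμdef, hE]
    have hgoal_v : lpN d b1 b2 (2 * nR ^ 2) v = (eLpNorm v P μ).toReal := by
      rw [lpN, ← hP, ← hμdef]
    have hgoal_w : lpN d b1 b2 (2 * nR ^ 2) w = (eLpNorm w P μ).toReal := by
      rw [lpN, ← hP, ← hμdef]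
    rw [hmaxe, hgoal_lpN, hgoal_v, hgoal_w]
    have hX0 : 0 ≤ lpN d b1 b2 2 (fun x => Fpoly d n a v x - Fpoly d n a w x) :=
      ENNReal.toReal_nonneg
    have hsq := pow_le_pow_left₀ hX0 hmainR 2
    calc lpN d b1 b2 2 (fun x => Fpoly d n a v x - Fpoly d n a w x) ^ 2
        ≤ (M * (nR * (nR + 1) / 2) * ((B ^ (1/2:ℝ)).toReal * E.toReal)) ^ 2 := hsq
      _ = (M * (nR * (nR + 1) / 2)) ^ 2 * E.toReal ^ 2 * ((B ^ (1/2:ℝ)).toReal) ^ 2 := by ring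
      _ = (M * (nR * (nR + 1) / 2)) ^ 2 * E.toReal ^ 2 * B.toReal := by rw [hBhalf_sq]
      _ ≤ (M * (nR * (nR + 1) / 2)) ^ 2 * E.toReal ^ 2 *
            (max 1 (volume (box d b1 b2)).toReal * (1 + Av.toReal + Aw.toReal)) := by
          apply mul_le_mul_of_nonneg_left hBR (by positivity)
      _ = max 1 (volume (box d b1 b2)).toReal * (nR * (nR + 1) / 2 * M) ^ 2 * E.toReal ^ 2 *
            (1 + (eLpNorm v P μ).toReal ^ e + (eLpNorm w P μ).toReal ^ e) := by
          rw [hAvt, hAwt]; ring
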